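/- Let L be a Z^n-graded Lie algebra over a field K and M a Z^n-graded L-module that is simple as a graded module (no nonzero proper graded submodules) but not simple as a module. Then there exists an invertible L-module endomorphism θ of M that is homogeneous of degree p for some nonzero p ∈ Z^n. -/

import Mathlib

set_option linter.unusedSectionVars false
set_option synthInstance.maxHeartbeats 1000000
set_option maxHeartbeats 1000000

namespace GradedAux

open DirectSum

variable {K : Type*} [Field K]
variable {L : Type*} [LieRing L] [LieAlgebra K L]
variable {M : Type*} [AddCommGroup M] [Module K M] [LieRingModule L M] [LieModule K L M]
variable {n : ℕ}
variable {Lcomp : (Fin n → ℤ) → Submodule K L}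
variable {Mcomp : (Fin n → ℤ) → Submodule K M}

theorem indep_zero (hMint : DirectSum.IsInternal Mcomp) (s : Finset (Fin n → ℤ))
    (w : (Fin n → ℤ) → M) (hw : ∀ i ∈ s, w i ∈ Mcomp i) (h0 : ∑ i ∈ s, w i = 0) :
    ∀ i ∈ s, w i = 0 := by
  classical
  intro i hi
  have h1 : (LinearEquiv.ofBijective (coeLinearMap Mcomp) hMint).symm (∑ j ∈ s, w j) i
      = ⟨w i, hw i hi⟩ := by
    rw [map_sum, DFinsupp.finset_sum_apply]
    rw [Finset.sum_eq_single_of_mem i hi]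
    · exact hMint.ofBijective_coeLinearMap_of_mem (hw i hi)
    · intro j hj hji
      exact hMint.ofBijective_coeLinearMap_of_mem_ne hji (hw j hj)
  rw [h0, map_zero] at h1
  have := congrArg (Subtype.val) h1.symm
  simpa using this

theorem indep_mem (hMint : DirectSum.IsInternal Mcomp) (s : Finset (Fin n → ℤ))
    (w : (Fin n → ℤ) → M) (hw : ∀ i ∈ s, w i ∈ Mcomp i) (g : Fin n → ℤ)
    (hg : (∑ i ∈ s, w i) ∈ Mcomp g) : ∀ i ∈ s, i ≠ g → w i = 0 := by
  classical
  intro i hi hig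
  by_cases hgs : g ∈ s
  · set t := ∑ j ∈ s, w j with ht
    have key := indep_zero hMint s (fun j => if j = g then w g - t else w j) ?_ ?_
    · have := key i hi
      simpa [hig] using this
    · intro j hj
      by_cases hjg : j = g
      · subst hjg; simpa using sub_mem (hw j hj) hg
      · simpa [hjg] using hw j hj
    · rw [← Finset.add_sum_erase _ _ hgs]
      simp only [if_true]
      have h2 : ∑ j ∈ s.erase g, (fun j => if j = g then w g - t else w j) j
          = ∑ j ∈ s.erase g, w j := by
        apply Finset.sum_congr rfl
        intro j hj
        simp [Finset.ne_of_mem_erase hj]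
      rw [h2]
      have h3 : w g + ∑ j ∈ s.erase g, w j = t := Finset.add_sum_erase _ _ hgs
      rw [sub_add_eq_add_sub, h3, sub_self]
  · have key := indep_zero hMint (insert g s)
        (fun j => if j = g then -(∑ j ∈ s, w j) else w j) ?_ ?_
    · have := key i (Finset.mem_insert_of_mem hi)
      simpa [hig] using this
    · intro j hj
      by_cases hjg : j = g
      · subst hjg; simpa using neg_mem hg
      · simp only [if_neg hjg]
        rcases Finset.mem_insert.mp hj with h | h
        · exact absurd h hjg
        · exact hw j h
    · rw [Finset.sum_insert hgs, if_pos rfl]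
      have h2 : ∑ j ∈ s, (fun j => if j = g then -(∑ j ∈ s, w j) else w j) j
          = ∑ j ∈ s, w j := by
        apply Finset.sum_congr rfl
        intro j hj
        simp [ne_of_mem_of_not_mem hj hgs]
      rw [h2, neg_add_cancel]

/-- The graded part of a Lie submodule is a Lie submodule. -/
def gp (hLint : DirectSum.IsInternal Lcomp)
    (hact : ∀ a b : Fin n → ℤ, ∀ x ∈ Lcomp a, ∀ v ∈ Mcomp b, ⁅x, v⁆ ∈ Mcomp (a + b))
    (P : LieSubmodule K L M) : LieSubmodule K L M where
  toSubmodule := ⨆ g, ((P : Submodule K M) ⊓ Mcomp g)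
  lie_mem := by
    intro x z hz
    have hz' : z ∈ ⨆ g, ((P : Submodule K M) ⊓ Mcomp g) := hz
    show ⁅x, z⁆ ∈ ⨆ g, ((P : Submodule K M) ⊓ Mcomp g)
    have hx : x ∈ ⨆ a, Lcomp a := hLint.submodule_iSup_eq_top ▸ Submodule.mem_top
    refine Submodule.iSup_induction
      (motive := fun z => ⁅x, z⁆ ∈ ⨆ g, ((P : Submodule K M) ⊓ Mcomp g)) _ hz' ?_ ?_ ?_
    · intro g z hzg
      have hzP : z ∈ P := (Submodule.mem_inf.mp hzg).1
      have hzM : z ∈ Mcomp g := (Submodule.mem_inf.mp hzg).2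
      refine Submodule.iSup_induction
        (motive := fun y => ⁅y, z⁆ ∈ ⨆ g, ((P : Submodule K M) ⊓ Mcomp g)) _ hx ?_ ?_ ?_
      · intro a y hy
        exact Submodule.mem_iSup_of_mem (a + g)
          (Submodule.mem_inf.mpr ⟨P.lie_mem hzP, hact a g y hy z hzM⟩)
      · simp
      · intro y₁ y₂ h1 h2; rw [add_lie]; exact add_mem h1 h2
    · simp
    · intro z1 z2 h1 h2; rw [lie_add]; exact add_mem h1 h2

theorem hom_bot (hLint : DirectSum.IsInternal Lcomp)
    (hact : ∀ a b : Fin n → ℤ, ∀ x ∈ Lcomp a, ∀ v ∈ Mcomp b, ⁅x, v⁆ ∈ Mcomp (a + b))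
    (hgradedSimple : ∀ N : LieSubmodule K L M,
      ((N : Submodule K M) = ⨆ g : Fin n → ℤ, ((N : Submodule K M) ⊓ Mcomp g)) →
        N = ⊥ ∨ N = ⊤)
    (P : LieSubmodule K L M) (hP : P ≠ ⊤) :
    ∀ g : Fin n → ℤ, ∀ z ∈ P, z ∈ Mcomp g → z = 0 := by
  intro g z hzP hzM
  have e : ((gp hLint hact P : LieSubmodule K L M) : Submodule K M)
      = ⨆ g, ((P : Submodule K M) ⊓ Mcomp g) := rfl
  have hgp : ((gp hLint hact P : LieSubmodule K L M) : Submodule K M)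
      = ⨆ g, (((gp hLint hact P : LieSubmodule K L M) : Submodule K M) ⊓ Mcomp g) := by
    rw [e]
    apply le_antisymm
    · refine iSup_le fun g => le_trans
        (le_inf (le_iSup (fun g => (P : Submodule K M) ⊓ Mcomp g) g) inf_le_right)
        (le_iSup (fun g => (⨆ g, ((P : Submodule K M) ⊓ Mcomp g)) ⊓ Mcomp g) g)
    · exact iSup_le fun g => inf_le_left
  rcases hgradedSimple _ hgp with h | h
  · have hz : z ∈ gp hLint hact P :=
      Submodule.mem_iSup_of_mem g (Submodule.mem_inf.mpr ⟨hzP, hzM⟩)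
    rw [h] at hz
    simpa using hz
  · exfalso
    apply hP
    rw [← LieSubmodule.toSubmodule_eq_top]
    have h1 : ((gp hLint hact P : LieSubmodule K L M) : Submodule K M) ≤ (P : Submodule K M) := by
      rw [e]; exact iSup_le fun g => inf_le_left
    rw [h] at h1
    simp only [LieSubmodule.top_toSubmodule] at h1
    exact top_le_iff.mp h1

theorem hom_top (hLint : DirectSum.IsInternal Lcomp)
    (hact : ∀ a b : Fin n → ℤ, ∀ x ∈ Lcomp a, ∀ v ∈ Mcomp b, ⁅x, v⁆ ∈ Mcomp (a + b))
    (hgradedSimple : ∀ N : LieSubmodule K L M,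
      ((N : Submodule K M) = ⨆ g : Fin n → ℤ, ((N : Submodule K M) ⊓ Mcomp g)) →
        N = ⊥ ∨ N = ⊤)
    (P : LieSubmodule K L M) (g : Fin n → ℤ) (z : M) (hzP : z ∈ P) (hzM : z ∈ Mcomp g)
    (hz0 : z ≠ 0) : P = ⊤ := by
  by_contra hP
  exact hz0 (hom_bot hLint hact hgradedSimple P hP g z hzP hzM)

end GradedAux

open GradedAux DirectSum

/-- Let `L` be a `ℤⁿ`-graded Lie algebra over a field `K` and `M` a `ℤⁿ`-graded
`L`-module that is simple as a graded module but not simple as a module.  Then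
`M` admits an invertible `L`-module endomorphism which is homogeneous of some
nonzero degree `p ∈ ℤⁿ`. -/
theorem gradedSimple_not_simple_exists_invertible_homogeneous_endo
    (K : Type*) [Field K]
    (L : Type*) [LieRing L] [LieAlgebra K L]
    (M : Type*) [AddCommGroup M] [Module K M] [LieRingModule L M] [LieModule K L M]
    (n : ℕ)
    (Lcomp : (Fin n → ℤ) → Submodule K L)
    (Mcomp : (Fin n → ℤ) → Submodule K M)
    (hLint : DirectSum.IsInternal Lcomp)
    (hLbr : ∀ a b : Fin n → ℤ, ∀ x ∈ Lcomp a, ∀ y ∈ Lcomp b, ⁅x, y⁆ ∈ Lcomp (a + b))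
    (hMint : DirectSum.IsInternal Mcomp)
    (hact : ∀ a b : Fin n → ℤ, ∀ x ∈ Lcomp a, ∀ v ∈ Mcomp b, ⁅x, v⁆ ∈ Mcomp (a + b))
    -- `M` is simple as a graded module: every graded Lie submodule is `⊥` or `⊤`,
    -- and `M ≠ 0`.
    (hMne : (⊤ : LieSubmodule K L M) ≠ ⊥)
    (hgradedSimple : ∀ N : LieSubmodule K L M,
      ((N : Submodule K M) = ⨆ g : Fin n → ℤ, ((N : Submodule K M) ⊓ Mcomp g)) →
        N = ⊥ ∨ N = ⊤)
    -- but `M` is not simple as a module: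
    (hnotSimple : ∃ N : LieSubmodule K L M, N ≠ ⊥ ∧ N ≠ ⊤) :
    ∃ θ : M →ₗ[K] M,
      (∀ (x : L) (v : M), θ ⁅x, v⁆ = ⁅x, θ v⁆) ∧
      Function.Bijective θ ∧
      ∃ p : Fin n → ℤ, p ≠ 0 ∧ ∀ g : Fin n → ℤ, ∀ v ∈ Mcomp g, θ v ∈ Mcomp (g + p) := by
  classical
  obtain ⟨N, hNbot, hNtop⟩ := hnotSimple
  -- decomposition machinery
  set e := LinearEquiv.ofBijective (coeLinearMap Mcomp) hMint with he
  set comp : M → (Fin n → ℤ) → M := fun w g => ((e.symm w) g : M) with hcomp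
  set supp : M → Finset (Fin n → ℤ) := fun w => (e.symm w).support with hsupp
  have hcomp_mem : ∀ w g, comp w g ∈ Mcomp g := fun w g => ((e.symm w) g).2
  have hsum : ∀ w : M, ∑ g ∈ supp w, comp w g = w := by
    intro w
    conv_rhs => rw [← e.apply_symm_apply w, ← DirectSum.sum_support_of (e.symm w)]
    rw [map_sum]
    refine Finset.sum_congr rfl fun g _ => ?_
    show comp w g = e (DirectSum.of _ g ((e.symm w) g))
    rw [he]
    show comp w g = coeLinearMap Mcomp (DirectSum.of _ g ((e.symm w) g))
    rw [coeLinearMap_of]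
  have hcomp_ne : ∀ w, ∀ g ∈ supp w, comp w g ≠ 0 := by
    intro w g hg h
    exact DFinsupp.mem_support_iff.mp hg (Subtype.ext h)
  have hcomp_nmem : ∀ w g, g ∉ supp w → comp w g = 0 := by
    intro w g hg
    rw [hcomp]
    simp only [DFinsupp.notMem_support_iff.mp hg]
    rfl
  have supp_sum_le : ∀ (s : Finset (Fin n → ℤ)) (z : (Fin n → ℤ) → M)
      (σ : (Fin n → ℤ) → (Fin n → ℤ)), (∀ h ∈ s, z h ∈ Mcomp (σ h)) →
      supp (∑ h ∈ s, z h) ⊆ s.image σ := by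
    intro s z σ hz i hi
    by_contra hni
    apply DFinsupp.mem_support_iff.mp hi
    have h1 : e.symm (∑ h ∈ s, z h) i = ∑ h ∈ s, e.symm (z h) i := by
      rw [map_sum, DFinsupp.finset_sum_apply]
    rw [h1]
    apply Finset.sum_eq_zero
    intro h hh
    have hne : σ h ≠ i := fun hc => hni (hc ▸ Finset.mem_image_of_mem σ hh)
    exact hMint.ofBijective_coeLinearMap_of_mem_ne hne (hz h hh)
  -- the algebra of operators generated by the action of L
  set A : Subalgebra K (Module.End K M) :=
    Algebra.adjoin K (Set.range (LieModule.toEnd K L M)) with hA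
  have htoEndA : ∀ x : L, LieModule.toEnd K L M x ∈ A :=
    fun x => Algebra.subset_adjoin ⟨x, rfl⟩
  have stab : ∀ T ∈ A, ∀ (P : LieSubmodule K L M), ∀ z ∈ P, T z ∈ P := by
    intro T hT
    refine Algebra.adjoin_induction
      (p := fun T _ => ∀ (P : LieSubmodule K L M), ∀ z ∈ P, T z ∈ P) ?_ ?_ ?_ ?_ hT
    · rintro _ ⟨x, rfl⟩ P z hz
      simpa [LieModule.toEnd_apply_apply] using P.lie_mem hz
    · intro r P z hz
      simpa [Module.algebraMap_end_apply] using P.smul_mem r hz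
    · intro x y hx hy ihx ihy P z hz
      simpa [LinearMap.add_apply] using P.add_mem (ihx P z hz) (ihy P z hz)
    · intro x y hx hy ihx ihy P z hz
      simpa [Module.End.mul_apply] using ihx P _ (ihy P z hz)
  -- cyclicity: a nonzero homogeneous vector generates everything
  have cyc : ∀ (w : M) (g : Fin n → ℤ), w ∈ Mcomp g → w ≠ 0 → ∀ z : M, ∃ T ∈ A, T w = z := by
    intro w g hw hw0 z
    let ev : Module.End K M →ₗ[K] M :=
      { toFun := fun T => T w
        map_add' := fun T T' => rfl
        map_smul' := fun c T => rfl }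
    let R : LieSubmodule K L M :=
      { toSubmodule := (Subalgebra.toSubmodule A).map ev
        lie_mem := by
          rintro x y hy
          obtain ⟨T, hT, rfl⟩ := hy
          refine ⟨LieModule.toEnd K L M x * T, A.mul_mem (htoEndA x) hT, ?_⟩
          show (LieModule.toEnd K L M x * T) w = ⁅x, ev T⁆
          simp [ev, Module.End.mul_apply, LieModule.toEnd_apply_apply] }
    have hwR : w ∈ R := ⟨1, A.one_mem, rfl⟩
    have hRtop : R = ⊤ := hom_top hLint hact hgradedSimple R g w hwR hw hw0
    have hz : z ∈ R := by rw [hRtop]; exact LieSubmodule.mem_top z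
    obtain ⟨T, hT, hTz⟩ := hz
    exact ⟨T, hT, hTz⟩
  -- the grading on the operator algebra
  set Hom : (Fin n → ℤ) → Submodule K (Module.End K M) := fun a =>
    { carrier := { f | ∀ g : Fin n → ℤ, ∀ u ∈ Mcomp g, f u ∈ Mcomp (g + a) }
      add_mem' := fun {f₁} {f₂} hf hg g u hu => by
        simpa [LinearMap.add_apply] using add_mem (hf g u hu) (hg g u hu)
      zero_mem' := fun g u hu => by simpa using (Mcomp (g + a)).zero_mem
      smul_mem' := fun c f hf g u hu => by
        simpa [LinearMap.smul_apply] using (Mcomp (g + a)).smul_mem c (hf g u hu) } with hHom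
  set C : Submodule K (Module.End K M) := ⨆ a, (Subalgebra.toSubmodule A ⊓ Hom a) with hC
  have memC : ∀ (a : Fin n → ℤ) (T : Module.End K M), T ∈ A → T ∈ Hom a → T ∈ C := fun a T h1 h2 =>
    Submodule.mem_iSup_of_mem a (Submodule.mem_inf.mpr ⟨h1, h2⟩)
  have mulC : ∀ T' ∈ C, ∀ T ∈ C, T * T' ∈ C := by
    intro T' hT'
    refine Submodule.iSup_induction (motive := fun T' => ∀ T ∈ C, T * T' ∈ C) _ hT' ?_ ?_ ?_
    · intro b T' hT'ab T hT
      have hT'A : T' ∈ Subalgebra.toSubmodule A := (Submodule.mem_inf.mp hT'ab).1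
      have hT'b : T' ∈ Hom b := (Submodule.mem_inf.mp hT'ab).2
      refine Submodule.iSup_induction (motive := fun T => T * T' ∈ C) _ hT ?_ ?_ ?_
      · intro a T hTab
        refine memC (b + a) _ (A.mul_mem (Submodule.mem_inf.mp hTab).1 hT'A) ?_
        intro g u hu
        have h1 : T' u ∈ Mcomp (g + b) := hT'b g u hu
        have h2 := (Submodule.mem_inf.mp hTab).2 (g + b) _ h1
        simpa [Module.End.mul_apply, add_assoc] using h2
      · simpa using C.zero_mem
      · intro x y hx hy; rw [add_mul]; exact C.add_mem hx hy
    · intro T hT; simpa using C.zero_mem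
    · intro x y hx hy T hT; rw [mul_add]; exact C.add_mem (hx T hT) (hy T hT)
  have AsubC : ∀ T ∈ A, T ∈ C := by
    intro T hT
    refine Algebra.adjoin_induction (p := fun T _ => T ∈ C) ?_ ?_ ?_ ?_ hT
    · rintro _ ⟨x, rfl⟩
      have hx : x ∈ ⨆ a, Lcomp a := hLint.submodule_iSup_eq_top ▸ Submodule.mem_top
      refine Submodule.iSup_induction (motive := fun x => LieModule.toEnd K L M x ∈ C) _ hx ?_ ?_ ?_
      · intro a y hy
        refine memC a _ (htoEndA y) ?_
        intro g u hu
        have := hact a g y hy u hu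
        rw [add_comm a g] at this
        simpa [LieModule.toEnd_apply_apply] using this
      · simpa using C.zero_mem
      · intro y z hy hz
        have : LieModule.toEnd K L M (y + z)
            = LieModule.toEnd K L M y + LieModule.toEnd K L M z := map_add _ _ _
        rw [this]; exact C.add_mem hy hz
    · intro r
      have h1 : (1 : Module.End K M) ∈ Hom 0 := by
        intro g u hu; simpa using hu
      have h2 := memC 0 1 A.one_mem h1
      have h3 : algebraMap K (Module.End K M) r = r • (1 : Module.End K M) :=
        Algebra.algebraMap_eq_smul_one r
      rw [h3]; exact C.smul_mem r h2
    · intro x y hx hy ihx ihy; exact C.add_mem ihx ihy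
    · intro x y hx hy ihx ihy; exact mulC y ihy x ihx
  have decT : ∀ T ∈ A, ∃ f : (Fin n → ℤ) →₀ Module.End K M,
      (∀ a, f a ∈ A ∧ f a ∈ Hom a) ∧ ∑ a ∈ f.support, f a = T := by
    intro T hT
    obtain ⟨f, hf, hfsum⟩ := (Submodule.mem_iSup_iff_exists_finsupp _ _).mp (AsubC T hT)
    refine ⟨f, fun a => ⟨(Submodule.mem_inf.mp (hf a)).1, (Submodule.mem_inf.mp (hf a)).2⟩, ?_⟩
    simpa [Finsupp.sum] using hfsum
  -- a nonzero element of N with minimal support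
  have hNhom := hom_bot hLint hact hgradedSimple N hNtop
  obtain ⟨w₀, hw₀N, hw₀⟩ : ∃ w, w ∈ N ∧ w ≠ 0 := by
    by_contra h
    push_neg at h
    exact hNbot ((LieSubmodule.eq_bot_iff N).mpr h)
  have hPex : ∃ k, ∃ v, v ∈ N ∧ v ≠ 0 ∧ (supp v).card = k := ⟨_, w₀, hw₀N, hw₀, rfl⟩
  obtain ⟨v, hvN, hv0, hvcard⟩ := Nat.find_spec hPex
  set k := Nat.find hPex with hk
  have hmin : ∀ z ∈ N, z ≠ 0 → k ≤ (supp z).card := fun z hz hz0 =>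
    Nat.find_min' hPex ⟨z, hz, hz0, rfl⟩
  have hk2 : 2 ≤ (supp v).card := by
    by_contra h
    push_neg at h
    interval_cases hc : (supp v).card
    · have : e.symm v = 0 := DFinsupp.support_eq_empty.mp (Finset.card_eq_zero.mp hc)
      exact hv0 (by simpa using congrArg e this)
    · obtain ⟨g, hg⟩ := Finset.card_eq_one.mp hc
      have hvg : v = comp v g := by
        conv_lhs => rw [← hsum v]
        rw [hg, Finset.sum_singleton]
      exact hv0 (hNhom g v hvN (hvg ▸ hcomp_mem v g))
  obtain ⟨n₀, hn₀, m, hm, hnm⟩ := Finset.one_lt_card.mp (lt_of_lt_of_le one_lt_two hk2)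
  set vn := comp v n₀ with hvn
  set vm := comp v m with hvm
  have hvn_mem : vn ∈ Mcomp n₀ := hcomp_mem v n₀
  have hvm_mem : vm ∈ Mcomp m := hcomp_mem v m
  have hvn0 : vn ≠ 0 := hcomp_ne v n₀ hn₀
  have hvm0 : vm ≠ 0 := hcomp_ne v m hm
  -- the key homogeneous annihilator lemma
  have key : ∀ (a : Fin n → ℤ) (T : Module.End K M), T ∈ A → T ∈ Hom a → T vn = 0 →
      ∀ g, T (comp v g) = 0 := by
    intro a T hTA hTa hT0 g
    have hTv0 : T v = 0 := by
      by_contra h0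
      have hTv : T v = ∑ h ∈ (supp v).erase n₀, T (comp v h) := by
        conv_lhs => rw [← hsum v, map_sum, ← Finset.add_sum_erase _ _ hn₀]
        rw [← hvn, hT0, zero_add]
      have hsub : supp (T v) ⊆ ((supp v).erase n₀).image (fun h => h + a) := by
        rw [hTv]
        exact supp_sum_le _ _ _ (fun h hh => hTa h _ (hcomp_mem v h))
      have hlt : (supp (T v)).card < k := by
        calc (supp (T v)).card ≤ (((supp v).erase n₀).image (fun h => h + a)).card :=
              Finset.card_le_card hsub
          _ ≤ ((supp v).erase n₀).card := Finset.card_image_le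
          _ = (supp v).card - 1 := Finset.card_erase_of_mem hn₀
          _ < k := by omega
      exact absurd (hmin _ (stab T hTA N v hvN) h0) (not_le.mpr hlt)
    by_cases hg : g ∈ supp v
    · have hz := indep_zero hMint ((supp v).image (fun h => h + a))
        (fun i => T (comp v (i - a))) ?_ ?_
      · have := hz (g + a) (Finset.mem_image_of_mem _ hg)
        simpa [add_sub_cancel_right] using this
      · intro i hi
        obtain ⟨h, hh, rfl⟩ := Finset.mem_image.mp hi
        simpa [add_sub_cancel_right] using hTa h _ (hcomp_mem v h)
      · rw [Finset.sum_image (fun x _ y _ hxy => by simpa using hxy)]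
        have h2 : ∑ h ∈ supp v, T (comp v (h + a - a)) = ∑ h ∈ supp v, T (comp v h) := by
          refine Finset.sum_congr rfl fun h _ => by rw [add_sub_cancel_right]
        rw [h2, ← map_sum, hsum, hTv0]
    · rw [hcomp_nmem v g hg, map_zero]
  -- the full annihilator lemma
  have ann : ∀ T : Module.End K M, T ∈ A → T vn = 0 → ∀ g, T (comp v g) = 0 := by
    intro T hT h0 g
    obtain ⟨f, hf, hfsum⟩ := decT T hT
    have h1 : ∀ a ∈ f.support, f a vn = 0 := by
      have hz := indep_zero hMint (f.support.image (fun a => n₀ + a))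
        (fun i => f (i - n₀) vn) ?_ ?_
      · intro a ha
        have := hz (n₀ + a) (Finset.mem_image_of_mem _ ha)
        simpa [add_sub_cancel_left] using this
      · intro i hi
        obtain ⟨a, ha, rfl⟩ := Finset.mem_image.mp hi
        simpa [add_sub_cancel_left] using (hf a).2 n₀ vn hvn_mem
      · rw [Finset.sum_image (fun x _ y _ hxy => by simpa using hxy)]
        have h2 : ∑ a ∈ f.support, f (n₀ + a - n₀) vn = ∑ a ∈ f.support, f a vn := by
          refine Finset.sum_congr rfl fun a _ => by rw [add_sub_cancel_left]
        rw [h2, ← LinearMap.sum_apply, hfsum, h0]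
    calc T (comp v g) = ∑ a ∈ f.support, f a (comp v g) := by
          rw [← hfsum, LinearMap.sum_apply]
      _ = 0 := Finset.sum_eq_zero fun a ha => key a (f a) (hf a).1 (hf a).2 (h1 a ha) g
  -- construction of θ
  have cycn : ∀ z : M, ∃ T ∈ A, T vn = z := cyc vn n₀ hvn_mem hvn0
  choose Tof hTofA hTof using cycn
  have wd : ∀ T T' : Module.End K M, T ∈ A → T' ∈ A → T vn = T' vn → T vm = T' vm := by
    intro T T' hT hT' h
    have h0 : (T - T') vn = 0 := by simp [LinearMap.sub_apply, h]
    have := ann (T - T') (A.sub_mem hT hT') h0 m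
    rw [← hvm] at this
    simpa [LinearMap.sub_apply, sub_eq_zero] using this
  set θ : M →ₗ[K] M :=
    { toFun := fun z => Tof z vm
      map_add' := by
        intro z z'
        have h : (Tof (z + z')) vn = (Tof z + Tof z') vn := by
          simp [LinearMap.add_apply, hTof]
        simpa [LinearMap.add_apply] using
          wd _ _ (hTofA _) (A.add_mem (hTofA z) (hTofA z')) h
      map_smul' := by
        intro c z
        have h : (Tof (c • z)) vn = (c • Tof z) vn := by
          simp [LinearMap.smul_apply, hTof]
        simpa [LinearMap.smul_apply] using
          wd _ _ (hTofA _) (A.smul_mem (hTofA z) c) h } with hθ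
  have θapp : ∀ z : M, θ z = Tof z vm := fun z => rfl
  have θeq : ∀ (T : Module.End K M), T ∈ A → ∀ z, T vn = z → θ z = T vm := by
    intro T hT z hz
    rw [θapp]
    exact wd (Tof z) T (hTofA z) hT (by rw [hTof, ← hz])
  have θcomm : ∀ (x : L) (z : M), θ ⁅x, z⁆ = ⁅x, θ z⁆ := by
    intro x z
    have h1 : (LieModule.toEnd K L M x * Tof z) vn = ⁅x, z⁆ := by
      rw [Module.End.mul_apply, hTof, LieModule.toEnd_apply_apply]
    rw [θeq _ (A.mul_mem (htoEndA x) (hTofA z)) _ h1, Module.End.mul_apply,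
      LieModule.toEnd_apply_apply, θapp]
  set p : Fin n → ℤ := m - n₀ with hp
  have hp0 : p ≠ 0 := sub_ne_zero_of_ne (Ne.symm hnm)
  have θhom : ∀ g : Fin n → ℤ, ∀ z ∈ Mcomp g, θ z ∈ Mcomp (g + p) := by
    intro g z hz
    obtain ⟨f, hf, hfsum⟩ := decT (Tof z) (hTofA z)
    have hcomp0 : ∀ a ∈ f.support, a ≠ g - n₀ → f a vn = 0 := by
      have hz' := indep_mem hMint (f.support.image (fun a => n₀ + a))
        (fun i => f (i - n₀) vn) ?_ g ?_
      · intro a ha hag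
        have := hz' (n₀ + a) (Finset.mem_image_of_mem _ ha)
          (fun hcontra => hag (by rw [← hcontra, add_sub_cancel_left]))
        simpa [add_sub_cancel_left] using this
      · intro i hi
        obtain ⟨a, ha, rfl⟩ := Finset.mem_image.mp hi
        simpa [add_sub_cancel_left] using (hf a).2 n₀ vn hvn_mem
      · rw [Finset.sum_image (fun x _ y _ hxy => by simpa using hxy)]
        have h2 : ∑ a ∈ f.support, f (n₀ + a - n₀) vn = ∑ a ∈ f.support, f a vn := by
          refine Finset.sum_congr rfl fun a _ => by rw [add_sub_cancel_left]
        rw [h2, ← LinearMap.sum_apply, hfsum, hTof]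
        exact hz
    have hθz : θ z = ∑ a ∈ f.support, f a vm := by
      rw [θapp, ← hfsum, LinearMap.sum_apply]
    rw [hθz]
    apply Submodule.sum_mem
    intro a ha
    by_cases hag : a = g - n₀
    · subst hag
      have h3 : f (g - n₀) vm ∈ Mcomp (m + (g - n₀)) := (hf _).2 m vm hvm_mem
      have heq : m + (g - n₀) = g + p := by rw [hp]; abel
      rwa [heq] at h3
    · have h0 := hcomp0 a ha hag
      have h4 := key a (f a) (hf a).1 (hf a).2 h0 m
      rw [← hvm] at h4
      rw [h4]
      exact (Mcomp (g + p)).zero_mem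
  have θsurj : Function.Surjective θ := by
    intro y
    obtain ⟨T, hT, hTy⟩ := cyc vm m hvm_mem hvm0 y
    exact ⟨T vn, by rw [θeq T hT _ rfl, hTy]⟩
  have θinj : Function.Injective θ := by
    set Kθ : LieSubmodule K L M :=
      { toSubmodule := LinearMap.ker θ
        lie_mem := by
          intro x z hz
          have hz' : θ z = 0 := hz
          show θ ⁅x, z⁆ = 0
          rw [θcomm, hz', lie_zero] } with hKθ
    have hKmem : ∀ z, z ∈ Kθ ↔ θ z = 0 := fun z => Iff.rfl
    have hKgraded : ((Kθ : LieSubmodule K L M) : Submodule K M)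
        = ⨆ g, (((Kθ : LieSubmodule K L M) : Submodule K M) ⊓ Mcomp g) := by
      apply le_antisymm
      · intro z hz
        have hz0 : θ z = 0 := hz
        have hcomps : ∀ g ∈ supp z, θ (comp z g) = 0 := by
          have hz' := indep_zero hMint ((supp z).image (fun h => h + p))
            (fun i => θ (comp z (i - p))) ?_ ?_
          · intro g hg
            have := hz' (g + p) (Finset.mem_image_of_mem _ hg)
            simpa [add_sub_cancel_right] using this
          · intro i hi
            obtain ⟨g, hg, rfl⟩ := Finset.mem_image.mp hi
            simpa [add_sub_cancel_right] using θhom g _ (hcomp_mem z g)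
          · rw [Finset.sum_image (fun x _ y _ hxy => by simpa using hxy)]
            have h2 : ∑ g ∈ supp z, θ (comp z (g + p - p)) = ∑ g ∈ supp z, θ (comp z g) := by
              refine Finset.sum_congr rfl fun g _ => by rw [add_sub_cancel_right]
            rw [h2, ← map_sum, hsum, hz0]
        have hsm : (∑ g ∈ supp z, comp z g)
            ∈ ⨆ g, (((Kθ : LieSubmodule K L M) : Submodule K M) ⊓ Mcomp g) := by
          apply Submodule.sum_mem
          intro g hg
          exact Submodule.mem_iSup_of_mem g
            (Submodule.mem_inf.mpr ⟨LinearMap.mem_ker.mpr (hcomps g hg), hcomp_mem z g⟩)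
        rwa [hsum z] at hsm
      · exact iSup_le fun g => inf_le_left
    have hKbot : Kθ = ⊥ := by
      rcases hgradedSimple Kθ hKgraded with h | h
      · exact h
      · exfalso
        have hmem : vn ∈ Kθ := h ▸ LieSubmodule.mem_top vn
        have h1 : θ vn = 0 := hmem
        rw [θeq 1 A.one_mem vn (Module.End.one_apply vn)] at h1
        exact hvm0 (by simpa using h1)
    rw [← LinearMap.ker_eq_bot]
    have hcoe : (Kθ : Submodule K M) = LinearMap.ker θ := rfl
    rw [← hcoe, hKbot, LieSubmodule.bot_toSubmodule]
  exact ⟨θ, θcomm, ⟨θinj, θsurj⟩, p, hp0, θhom⟩
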